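/- The integral ∫₋₁¹ dx/√((1−x²)(1+(1−x²)μ)) tends to 0 as μ → ∞. -/
import Mathlib


open Filter

private noncomputable def gfun : ℝ → ℝ :=
  fun x => (1 - x) ^ (-(3/4) : ℝ) + (1 + x) ^ (-(3/4) : ℝ)

private lemma gfun_integrable : IntervalIntegrable gfun MeasureTheory.volume (-1) 1 := by
  have h1 : IntervalIntegrable (fun x : ℝ => x ^ (-(3/4) : ℝ)) MeasureTheory.volume 0 2 :=
    intervalIntegral.intervalIntegrable_rpow' (by norm_num)
  have h2 : IntervalIntegrable (fun x : ℝ => (1 - x) ^ (-(3/4) : ℝ)) MeasureTheory.volume (-1) 1 := by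
    have := h1.comp_sub_left 1
    norm_num at this
    exact this.symm
  have h3 : IntervalIntegrable (fun x : ℝ => (1 + x) ^ (-(3/4) : ℝ)) MeasureTheory.volume (-1) 1 := by
    have := h1.comp_add_left 1
    norm_num at this
    exact this
  exact h2.add h3

private lemma key_bound {μ x : ℝ} (hμ : 1 ≤ μ) (hx : x ∈ Set.Icc (-1 : ℝ) 1) :
    1 / Real.sqrt ((1 - x ^ 2) * (1 + (1 - x ^ 2) * μ)) ≤ gfun x * μ ^ (-(1/4) : ℝ) := by
  obtain ⟨hx1, hx2⟩ := hx
  have hμ0 : (0:ℝ) < μ := lt_of_lt_of_le one_pos hμ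
  have h1x : (0:ℝ) ≤ 1 - x := by linarith
  have h1x' : (0:ℝ) ≤ 1 + x := by linarith
  have hg0 : 0 ≤ gfun x := by
    unfold gfun; positivity
  have hrhs0 : 0 ≤ gfun x * μ ^ (-(1/4) : ℝ) := by positivity
  set t : ℝ := 1 - x ^ 2 with ht
  have ht0 : 0 ≤ t := by nlinarith
  rcases eq_or_lt_of_le ht0 with h0 | hpos
  · rw [← h0, zero_mul, Real.sqrt_zero, div_zero]
    exact hrhs0
  · -- t > 0 case
    have hst : Real.sqrt (t * μ) ≤ 1 + t * μ := by
      have h := Real.sq_sqrt (by positivity : (0:ℝ) ≤ t * μ)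
      nlinarith [Real.sqrt_nonneg (t * μ)]
    have hpow : t ^ ((3:ℝ)/4) * μ ^ ((1:ℝ)/4) ≤ Real.sqrt (t * (1 + t * μ)) := by
      rw [Real.sqrt_eq_rpow]
      have key : t ^ ((3:ℝ)/2) * μ ^ ((1:ℝ)/2) ≤ t * (1 + t * μ) := by
        have h32 : t ^ ((3:ℝ)/2) = t * t ^ ((1:ℝ)/2) := by
          rw [show (3:ℝ)/2 = 1 + 1/2 by norm_num, Real.rpow_add hpos, Real.rpow_one]
        rw [h32, mul_assoc]
        apply mul_le_mul_of_nonneg_left _ hpos.le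
        calc t ^ ((1:ℝ)/2) * μ ^ ((1:ℝ)/2) = Real.sqrt (t * μ) := by
              rw [Real.sqrt_eq_rpow, Real.mul_rpow hpos.le hμ0.le]
          _ ≤ 1 + t * μ := hst
      calc t ^ ((3:ℝ)/4) * μ ^ ((1:ℝ)/4)
          = (t ^ ((3:ℝ)/2) * μ ^ ((1:ℝ)/2)) ^ ((1:ℝ)/2) := by
            rw [Real.mul_rpow (by positivity) (by positivity),
              ← Real.rpow_mul hpos.le, ← Real.rpow_mul hμ0.le]
            norm_num
        _ ≤ (t * (1 + t * μ)) ^ ((1:ℝ)/2) :=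
            Real.rpow_le_rpow (by positivity) key (by norm_num)
    have hden : 0 < t ^ ((3:ℝ)/4) * μ ^ ((1:ℝ)/4) := by positivity
    have h1 : 1 / Real.sqrt (t * (1 + t * μ)) ≤ 1 / (t ^ ((3:ℝ)/4) * μ ^ ((1:ℝ)/4)) :=
      one_div_le_one_div_of_le hden hpow
    have h2 : 1 / (t ^ ((3:ℝ)/4) * μ ^ ((1:ℝ)/4)) = t ^ (-(3/4) : ℝ) * μ ^ (-(1/4) : ℝ) := by
      rw [Real.rpow_neg hpos.le, Real.rpow_neg hμ0.le, one_div, mul_inv]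
    have h3 : t ^ (-(3/4) : ℝ) ≤ gfun x := by
      have hfact : t = (1 - x) * (1 + x) := by ring
      rw [hfact, Real.mul_rpow h1x h1x']
      unfold gfun
      rcases le_or_gt 0 x with hx0 | hx0
      · have : (1 + x) ^ (-(3/4) : ℝ) ≤ 1 :=
          Real.rpow_le_one_of_one_le_of_nonpos (by linarith) (by norm_num)
        nlinarith [Real.rpow_nonneg h1x (-(3/4) : ℝ), Real.rpow_nonneg h1x' (-(3/4) : ℝ)]
      · have : (1 - x) ^ (-(3/4) : ℝ) ≤ 1 :=
          Real.rpow_le_one_of_one_le_of_nonpos (by linarith) (by norm_num)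
        nlinarith [Real.rpow_nonneg h1x (-(3/4) : ℝ), Real.rpow_nonneg h1x' (-(3/4) : ℝ)]
    calc 1 / Real.sqrt (t * (1 + t * μ)) ≤ t ^ (-(3/4) : ℝ) * μ ^ (-(1/4) : ℝ) := h2 ▸ h1
      _ ≤ gfun x * μ ^ (-(1/4) : ℝ) :=
          mul_le_mul_of_nonneg_right h3 (by positivity)

theorem stmt_12 :
    Tendsto
      (fun μ : ℝ =>
        ∫ x in (-1:ℝ)..1, 1 / Real.sqrt ((1 - x ^ 2) * (1 + (1 - x ^ 2) * μ)))
      atTop (nhds 0) := by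
  set C : ℝ := ∫ x in (-1:ℝ)..1, gfun x with hC
  have hupper : Tendsto (fun μ : ℝ => C * μ ^ (-(1/4) : ℝ)) atTop (nhds 0) := by
    have := (tendsto_rpow_neg_atTop (by norm_num : (0:ℝ) < 1/4)).const_mul C
    simpa using this
  apply tendsto_of_tendsto_of_tendsto_of_le_of_le' tendsto_const_nhds hupper
  · filter_upwards with μ
    apply intervalIntegral.integral_nonneg (by norm_num)
    intro x _
    positivity
  · filter_upwards [eventually_ge_atTop (1:ℝ)] with μ hμ
    have hfm : MeasureTheory.AEStronglyMeasurable
        (fun x : ℝ => 1 / Real.sqrt ((1 - x ^ 2) * (1 + (1 - x ^ 2) * μ)))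
        (MeasureTheory.volume.restrict (Set.uIoc (-1:ℝ) 1)) := by
      apply Measurable.aestronglyMeasurable
      apply Measurable.div measurable_const
      exact (Real.continuous_sqrt.comp (by continuity)).measurable
    have hgμ : IntervalIntegrable (fun x => gfun x * μ ^ (-(1/4) : ℝ))
        MeasureTheory.volume (-1) 1 := gfun_integrable.mul_const _
    have hfint : IntervalIntegrable
        (fun x : ℝ => 1 / Real.sqrt ((1 - x ^ 2) * (1 + (1 - x ^ 2) * μ)))
        MeasureTheory.volume (-1) 1 := by
      apply hgμ.mono_fun hfm
      filter_upwards [MeasureTheory.ae_restrict_mem measurableSet_uIoc] with x hx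
      have hx' : x ∈ Set.Icc (-1:ℝ) 1 := by
        have : x ∈ Set.uIcc (-1:ℝ) 1 := Set.uIoc_subset_uIcc hx
        rwa [Set.uIcc_of_le (by norm_num)] at this
      have h1 := key_bound hμ hx'
      have h0 : (0:ℝ) ≤ 1 / Real.sqrt ((1 - x ^ 2) * (1 + (1 - x ^ 2) * μ)) := div_nonneg one_pos.le (Real.sqrt_nonneg _)
      have h0' : (0:ℝ) ≤ gfun x * μ ^ (-(1/4) : ℝ) := by
        have h := Real.rpow_nonneg (by linarith : (0:ℝ) ≤ μ) (-(1/4) : ℝ)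
        have hg : 0 ≤ gfun x := by
          unfold gfun
          have := hx'.1; have := hx'.2
          exact add_nonneg (Real.rpow_nonneg (by linarith) _) (Real.rpow_nonneg (by linarith) _)
        exact mul_nonneg hg h
      simp only [Real.norm_eq_abs, abs_of_nonneg h0, abs_of_nonneg h0']
      exact h1
    calc (∫ x in (-1:ℝ)..1, 1 / Real.sqrt ((1 - x ^ 2) * (1 + (1 - x ^ 2) * μ)))
        ≤ ∫ x in (-1:ℝ)..1, gfun x * μ ^ (-(1/4) : ℝ) := by
          apply intervalIntegral.integral_mono_on (by norm_num) hfint hgμ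
          intro x hx
          exact key_bound hμ hx
      _ = C * μ ^ (-(1/4) : ℝ) := by
          rw [intervalIntegral.integral_mul_const]
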